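/- For any Z ∈ ℝ^{n1×n2}, the nuclear norm has the semidefinite characterization ‖Z‖_* = min { (1/2) tr(W₁ + W₂) : W₁ ∈ ℝ^{n1×n1}, W₂ ∈ ℝ^{n2×n2} symmetric, and the block matrix [[W₁, Z],[Zᵀ, W₂]] is positive semidefinite }. -/

import Mathlib

open Matrix

/-- The singular values of a real `n1 × n2` matrix `Z`, sorted in descending order. -/
noncomputable def svDesc {n1 n2 : ℕ} (Z : Matrix (Fin n1) (Fin n2) ℝ) : Fin n1 → ℝ :=
  fun i =>
    Real.sqrt ((Matrix.isHermitian_mul_conjTranspose_self Z).eigenvalues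
      (Tuple.sort (Matrix.isHermitian_mul_conjTranspose_self Z).eigenvalues i.rev))

/-- The nuclear norm of `Z`: the sum of all its singular values. -/
noncomputable def nuclearNorm {n1 n2 : ℕ} (Z : Matrix (Fin n1) (Fin n2) ℝ) : ℝ :=
  ∑ i, svDesc Z i

lemma aux_ct_eq_t {m n : Type*} (A : Matrix m n ℝ) : Aᴴ = Aᵀ := by
  ext i j; simp [Matrix.conjTranspose_apply]

private lemma aux_trace_nonneg {n : Type*} [Fintype n] [DecidableEq n]
    {A : Matrix n n ℝ} (hA : A.PosSemidef) : 0 ≤ A.trace := by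
  rw [Matrix.trace]
  refine Finset.sum_nonneg fun i _ => ?_
  exact hA.diag_nonneg

private lemma aux_trace_fromBlocks {m n : Type*} [Fintype m] [Fintype n]
    (A : Matrix m m ℝ) (B : Matrix m n ℝ) (C : Matrix n m ℝ) (D : Matrix n n ℝ) :
    (Matrix.fromBlocks A B C D).trace = A.trace + D.trace := by
  simp [Matrix.trace, Fintype.sum_sum_type, Matrix.diag, Matrix.fromBlocks]

/-- Semidefinite characterization of the nuclear norm:
`‖Z‖_* = min { ½ tr(W₁ + W₂) : [[W₁, Z], [Zᵀ, W₂]] ⪰ 0, W₁, W₂ symmetric }`. -/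
theorem nuclearNorm_sdp_characterization (n1 n2 : ℕ) (Z : Matrix (Fin n1) (Fin n2) ℝ) :
    IsLeast
      { c : ℝ | ∃ (W₁ : Matrix (Fin n1) (Fin n1) ℝ) (W₂ : Matrix (Fin n2) (Fin n2) ℝ),
          W₁.IsSymm ∧ W₂.IsSymm ∧ (Matrix.fromBlocks W₁ Z Zᵀ W₂).PosSemidef ∧
          c = (1 / 2) * (W₁.trace + W₂.trace) }
      (nuclearNorm Z) := by
  have hA : (Z * Zᴴ).IsHermitian := Matrix.isHermitian_mul_conjTranspose_self Z
  set μ : Fin n1 → ℝ := hA.eigenvalues with hμdef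
  have key : (∑ i : Fin n1, Real.sqrt ((Matrix.isHermitian_mul_conjTranspose_self Z).eigenvalues
      (Tuple.sort (Matrix.isHermitian_mul_conjTranspose_self Z).eigenvalues i.rev)))
      = ∑ i, Real.sqrt (μ i) := by
    exact Equiv.sum_comp (Fin.revPerm.trans (Tuple.sort μ)) (fun j => Real.sqrt (μ j))
  have hμ0 : ∀ i, 0 ≤ μ i := fun i =>
    (Matrix.posSemidef_self_mul_conjTranspose Z).eigenvalues_nonneg i
  set U : Matrix (Fin n1) (Fin n1) ℝ := (hA.eigenvectorUnitary : Matrix (Fin n1) (Fin n1) ℝ)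
    with hUdef
  have hU1 : Uᴴ * U = 1 := by
    exact Matrix.mem_unitaryGroup_iff'.mp hA.eigenvectorUnitary.2
  have hU2 : U * Uᴴ = 1 := by
    exact Matrix.mem_unitaryGroup_iff.mp hA.eigenvectorUnitary.2
  have hspec : Uᴴ * (Z * Zᴴ) * U = Matrix.diagonal μ := by
    have := hA.conjStarAlgAut_star_eigenvectorUnitary
    simpa [hUdef, Unitary.conjStarAlgAut_star_apply, Matrix.star_eq_conjTranspose] using this
  set s : Fin n1 → ℝ := fun i => Real.sqrt (μ i) with hsdef
  set c : Fin n1 → ℝ := fun i => if μ i = 0 then 0 else (Real.sqrt (μ i))⁻¹ with hcdef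
  set d : Fin n1 → ℝ := fun i => if μ i = 0 then 0 else 1 with hddef
  have hsc : ∀ i, s i * c i = d i := by
    intro i
    by_cases h : μ i = 0
    · simp [hsdef, hcdef, hddef, h]
    · have : Real.sqrt (μ i) ≠ 0 := by
        simpa [Real.sqrt_eq_zero (hμ0 i)] using h
      simp [hsdef, hcdef, hddef, h, mul_inv_cancel₀ this]
  have hcμc : ∀ i, c i * μ i * c i = d i := by
    intro i
    by_cases h : μ i = 0
    · simp [hcdef, hddef, h]
    · have hsq : Real.sqrt (μ i) * Real.sqrt (μ i) = μ i := Real.mul_self_sqrt (hμ0 i)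
      have hne : Real.sqrt (μ i) ≠ 0 := by simpa [Real.sqrt_eq_zero (hμ0 i)] using h
      simp only [hcdef, hddef, h, if_false]
      field_simp
      rw [Real.sq_sqrt (hμ0 i)]
  have hcd : ∀ i, c i * d i = c i := by
    intro i; by_cases h : μ i = 0 <;> simp [hcdef, hddef, h]
  have hsd : ∀ i, s i * d i = s i := by
    intro i; by_cases h : μ i = 0 <;> simp [hsdef, hddef, h]
  have hμc : ∀ i, μ i * c i = s i := by
    intro i
    by_cases h : μ i = 0
    · simp [hsdef, hcdef, h]
    · have hsq : Real.sqrt (μ i) * Real.sqrt (μ i) = μ i := Real.mul_self_sqrt (hμ0 i)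
      have hne : Real.sqrt (μ i) ≠ 0 := by simpa [Real.sqrt_eq_zero (hμ0 i)] using h
      simp only [hcdef, hsdef, h, if_false]
      field_simp
      rw [Real.sq_sqrt (hμ0 i)]
  -- the zero-eigenvalue rows of Uᴴ * Z vanish
  have hG : (Uᴴ * Z) * (Uᴴ * Z)ᴴ = Matrix.diagonal μ := by
    rw [Matrix.conjTranspose_mul, Matrix.conjTranspose_conjTranspose]
    calc Uᴴ * Z * (Zᴴ * U) = Uᴴ * (Z * Zᴴ) * U := by
          simp only [Matrix.mul_assoc]
      _ = Matrix.diagonal μ := hspec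
  have hrow : ∀ i j, μ i = 0 → (Uᴴ * Z) i j = 0 := by
    intro i j h
    have h1 : ((Uᴴ * Z) * (Uᴴ * Z)ᴴ) i i = 0 := by rw [hG]; simp [h]
    rw [Matrix.mul_apply] at h1
    simp only [Matrix.conjTranspose_apply, star_trivial] at h1
    have h2 := (Finset.sum_eq_zero_iff_of_nonneg
      (fun k _ => mul_self_nonneg ((Uᴴ * Z) i k))).mp h1 j (Finset.mem_univ j)
    exact mul_self_eq_zero.mp h2
  have hDG : Matrix.diagonal d * (Uᴴ * Z) = Uᴴ * Z := by
    ext i j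
    rw [Matrix.diagonal_mul]
    by_cases h : μ i = 0
    · rw [hrow i j h, mul_zero]
    · rw [show d i = 1 by simp [hddef, h], one_mul]
  have hproj : U * Matrix.diagonal d * Uᴴ * Z = Z := by
    calc U * Matrix.diagonal d * Uᴴ * Z = U * (Matrix.diagonal d * (Uᴴ * Z)) := by
          simp only [Matrix.mul_assoc]
      _ = U * (Uᴴ * Z) := by rw [hDG]
      _ = Z := by rw [← Matrix.mul_assoc, hU2, Matrix.one_mul]
  set V : Matrix (Fin n2) (Fin n1) ℝ := Zᴴ * U * Matrix.diagonal c with hVdef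
  have hVH : Vᴴ = Matrix.diagonal c * (Uᴴ * Z) := by
    rw [hVdef, Matrix.conjTranspose_mul, Matrix.conjTranspose_mul,
      Matrix.diagonal_conjTranspose, Matrix.conjTranspose_conjTranspose]
    simp only [star_trivial, Matrix.mul_assoc]
  have hVHV : Vᴴ * V = Matrix.diagonal d := by
    rw [hVH, hVdef]
    calc Matrix.diagonal c * (Uᴴ * Z) * (Zᴴ * U * Matrix.diagonal c)
        = Matrix.diagonal c * (Uᴴ * (Z * Zᴴ) * U) * Matrix.diagonal c := by
          simp only [Matrix.mul_assoc]
      _ = Matrix.diagonal c * Matrix.diagonal μ * Matrix.diagonal c := by rw [hspec]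
      _ = Matrix.diagonal d := by
          rw [Matrix.diagonal_mul_diagonal, Matrix.diagonal_mul_diagonal,
            show (fun i => c i * μ i * c i) = d from funext hcμc]
  have hZV : U * Matrix.diagonal s * Vᴴ = Z := by
    rw [hVH]
    calc U * Matrix.diagonal s * (Matrix.diagonal c * (Uᴴ * Z))
        = U * (Matrix.diagonal s * Matrix.diagonal c) * Uᴴ * Z := by
          simp only [Matrix.mul_assoc]
      _ = U * Matrix.diagonal d * Uᴴ * Z := by
          rw [Matrix.diagonal_mul_diagonal, show (fun i => s i * c i) = d from funext hsc]
      _ = Z := hproj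
  have hVd : V * Matrix.diagonal d = V := by
    rw [hVdef, Matrix.mul_assoc, Matrix.mul_assoc, Matrix.diagonal_mul_diagonal,
      show (fun i => c i * d i) = c from funext hcd, ← Matrix.mul_assoc]
  set W₁ : Matrix (Fin n1) (Fin n1) ℝ := U * Matrix.diagonal s * Uᴴ with hW1def
  set W₂ : Matrix (Fin n2) (Fin n2) ℝ := V * Matrix.diagonal s * Vᴴ with hW2def
  have hW1H : W₁ᴴ = W₁ := by
    rw [hW1def]
    simp only [Matrix.conjTranspose_mul, Matrix.conjTranspose_conjTranspose,
      Matrix.diagonal_conjTranspose]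
    simp [Matrix.mul_assoc]
  have hW2H : W₂ᴴ = W₂ := by
    rw [hW2def]
    simp only [Matrix.conjTranspose_mul, Matrix.conjTranspose_conjTranspose,
      Matrix.diagonal_conjTranspose]
    simp [Matrix.mul_assoc]
  have hZUt : V * Matrix.diagonal s * Uᴴ = Zᵀ := by
    rw [← aux_ct_eq_t Z, ← hZV]
    simp only [Matrix.conjTranspose_mul, Matrix.conjTranspose_conjTranspose,
      Matrix.diagonal_conjTranspose, star_trivial, Matrix.mul_assoc]
  have hblocks : Matrix.fromBlocks W₁ Z Zᵀ W₂
      = Matrix.fromRows U V * Matrix.diagonal s * (Matrix.fromRows U V)ᴴ := by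
    rw [Matrix.conjTranspose_fromRows_eq_fromCols_conjTranspose,
      Matrix.fromRows_mul, Matrix.fromRows_mul_fromCols, hZV, hZUt]
  have hsPSD : (Matrix.diagonal s).PosSemidef :=
    Matrix.posSemidef_diagonal_iff.mpr fun i => Real.sqrt_nonneg _
  have hMPSD : (Matrix.fromBlocks W₁ Z Zᵀ W₂).PosSemidef := by
    rw [hblocks]
    exact hsPSD.mul_mul_conjTranspose_same _
  have htr1 : W₁.trace = ∑ i, s i := by
    rw [hW1def, Matrix.trace_mul_comm, ← Matrix.mul_assoc, hU1, Matrix.one_mul,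
      Matrix.trace_diagonal]
  have htr2 : W₂.trace = ∑ i, s i := by
    rw [hW2def, Matrix.trace_mul_comm, ← Matrix.mul_assoc, hVHV,
      Matrix.diagonal_mul_diagonal, Matrix.trace_diagonal]
    exact Finset.sum_congr rfl fun i _ => by rw [mul_comm]; exact hsd i
  have hnn : nuclearNorm Z = ∑ i, s i := by
    unfold nuclearNorm svDesc
    exact key
  constructor
  · refine ⟨W₁, W₂, ?_, ?_, hMPSD, ?_⟩
    · show W₁ᵀ = W₁
      rw [← aux_ct_eq_t]; exact hW1H
    · show W₂ᵀ = W₂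
      rw [← aux_ct_eq_t]; exact hW2H
    · rw [htr1, htr2, hnn]; ring
  · rintro x ⟨W₁', W₂', hs1, hs2, hPSD, rfl⟩
    have hW2PSD : W₂'.PosSemidef := by
      have h := hPSD.submatrix Sum.inr
      have he : (Matrix.fromBlocks W₁' Z Zᵀ W₂').submatrix Sum.inr Sum.inr = W₂' := by
        ext i j
        simp [Matrix.submatrix_apply, Matrix.fromBlocks_apply₂₂]
      rwa [he] at h
    set T : Matrix (Fin n1 ⊕ Fin n2) (Fin n1) ℝ := Matrix.fromRows U (-V) with hTdef
    have hTPSD := hPSD.conjTranspose_mul_mul_same T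
    have htr0 : 0 ≤ (Tᴴ * Matrix.fromBlocks W₁' Z Zᵀ W₂' * T).trace :=
      aux_trace_nonneg hTPSD
    have hexp : Tᴴ * Matrix.fromBlocks W₁' Z Zᵀ W₂' * T
        = (Uᴴ * W₁' + (-V)ᴴ * Zᵀ) * U + (Uᴴ * Z + (-V)ᴴ * W₂') * (-V) := by
      rw [hTdef, Matrix.conjTranspose_fromRows_eq_fromCols_conjTranspose,
        Matrix.fromCols_mul_fromBlocks, Matrix.fromCols_mul_fromRows]
    have ht2 : (Uᴴ * Z * V).trace = ∑ i, s i := by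
      have h2 : Uᴴ * Z * V = Matrix.diagonal (fun i => μ i * c i) := by
        rw [hVdef]
        calc Uᴴ * Z * (Zᴴ * U * Matrix.diagonal c)
            = Uᴴ * (Z * Zᴴ) * U * Matrix.diagonal c := by simp only [Matrix.mul_assoc]
          _ = Matrix.diagonal μ * Matrix.diagonal c := by rw [hspec]
          _ = Matrix.diagonal (fun i => μ i * c i) := by rw [Matrix.diagonal_mul_diagonal]
      rw [h2, Matrix.trace_diagonal]
      exact Finset.sum_congr rfl fun i _ => hμc i
    have ht3 : (Vᴴ * Zᵀ * U).trace = ∑ i, s i := by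
      have h3 : Vᴴ * Zᵀ * U = Matrix.diagonal (fun i => c i * μ i) := by
        rw [hVH, ← aux_ct_eq_t Z]
        calc Matrix.diagonal c * (Uᴴ * Z) * Zᴴ * U
            = Matrix.diagonal c * (Uᴴ * (Z * Zᴴ) * U) := by simp only [Matrix.mul_assoc]
          _ = Matrix.diagonal c * Matrix.diagonal μ := by rw [hspec]
          _ = Matrix.diagonal (fun i => c i * μ i) := by rw [Matrix.diagonal_mul_diagonal]
      rw [h3, Matrix.trace_diagonal]
      exact Finset.sum_congr rfl fun i _ => by rw [mul_comm]; exact hμc i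
    have ht1 : (Uᴴ * W₁' * U).trace = W₁'.trace := by
      rw [Matrix.trace_mul_comm, ← Matrix.mul_assoc, hU2, Matrix.one_mul]
    -- the projection Q
    set Q : Matrix (Fin n2) (Fin n2) ℝ := V * Vᴴ with hQdef
    have hQ2 : Q * Q = Q := by
      rw [hQdef]
      calc V * Vᴴ * (V * Vᴴ) = V * (Vᴴ * V) * Vᴴ := by simp only [Matrix.mul_assoc]
        _ = V * Matrix.diagonal d * Vᴴ := by rw [hVHV]
        _ = V * Vᴴ := by rw [hVd]
    have hQH : Qᴴ = Q := by
      rw [hQdef, Matrix.conjTranspose_mul, Matrix.conjTranspose_conjTranspose]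
    have ht4 : (Vᴴ * W₂' * V).trace = (Q * W₂').trace := by
      rw [Matrix.trace_mul_comm, ← Matrix.mul_assoc, hQdef]
    have hQle : (Q * W₂').trace ≤ W₂'.trace := by
      have hR2 : (1 - Q) * (1 - Q) = 1 - Q := by
        have h5 : (1 - Q) * (1 - Q) = 1 - Q - Q + Q * Q := by noncomm_ring
        rw [h5, hQ2]; abel
      have hRH : (1 - Q)ᴴ = 1 - Q := by
        rw [Matrix.conjTranspose_sub, Matrix.conjTranspose_one, hQH]
      have hRPSD : ((1 - Q) * W₂' * (1 - Q)).PosSemidef := by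
        have := hW2PSD.conjTranspose_mul_mul_same (1 - Q)
        rwa [hRH] at this
      have h6 : ((1 - Q) * W₂').trace = ((1 - Q) * W₂' * (1 - Q)).trace := by
        conv_lhs => rw [← hR2]
        rw [Matrix.mul_assoc, Matrix.trace_mul_comm, Matrix.mul_assoc]
      have h7 : 0 ≤ ((1 - Q) * W₂').trace := by
        rw [h6]; exact aux_trace_nonneg hRPSD
      have h8 : ((1 - Q) * W₂').trace = W₂'.trace - (Q * W₂').trace := by
        rw [Matrix.sub_mul, Matrix.one_mul, Matrix.trace_sub]
      linarith [h7, h8.symm.le]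
    -- assemble
    have hmain : 0 ≤ W₁'.trace - (∑ i, s i) - (∑ i, s i) + (Q * W₂').trace := by
      have h9 : (Tᴴ * Matrix.fromBlocks W₁' Z Zᵀ W₂' * T).trace
          = W₁'.trace - (∑ i, s i) - (∑ i, s i) + (Q * W₂').trace := by
        rw [hexp]
        have e1 : (Uᴴ * W₁' + (-V)ᴴ * Zᵀ) * U + (Uᴴ * Z + (-V)ᴴ * W₂') * -V
            = Uᴴ * W₁' * U - Vᴴ * Zᵀ * U - Uᴴ * Z * V + Vᴴ * W₂' * V := by
          simp only [Matrix.conjTranspose_neg, Matrix.add_mul, Matrix.neg_mul,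
            Matrix.mul_neg, neg_neg]
          abel
        rw [e1, Matrix.trace_add, Matrix.trace_sub, Matrix.trace_sub, ht1, ht2, ht3, ht4]
      linarith [htr0, h9.symm.le]
    rw [hnn]
    linarith [hmain, hQle]
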